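/- Let 𝒜 : ℝ^{m×n} → ℝ^p be a linear map with restricted isometry constant R_{2r}, let S_l be the tangent space of the rank-r matrix manifold at a rank-r matrix X_l, let G_l and P_{l−1} be m×n matrices with P_{S_l}(P_{l−1}) ≠ 0, and suppose the restart conditions hold: |⟨P_{S_l}(G_l), P_{S_l}(P_{l−1})⟩| ≤ κ_1 ‖P_{S_l}(G_l)‖_F ‖P_{S_l}(P_{l−1})‖_F and ‖P_{S_l}(G_l)‖_F ≤ κ_2 ‖P_{S_l}(P_{l−1})‖_F, for constants 0 < κ_1 < 1 and κ_2 ≥ 1 with (1−R_{2r}) − κ_1(1+R_{2r}) > 0. Define β_l = −⟨𝒜 P_{S_l}(G_l), 𝒜 P_{S_l}(P_{l−1})⟩ / ‖𝒜 P_{S_l}(P_{l−1})‖_2², P_l = P_{S_l}(G_l) + β_l P_{S_l}(P_{l−1}), and α_l = ⟨P_{S_l}(G_l), P_{S_l}(P_l)⟩ / ‖𝒜 P_{S_l}(P_l)‖_2² (with P_{S_l}(P_l) ≠ 0). Then |α_l − 1| ≤ R_{2r} / ((1 − R_{2r}) − κ_1(1 + R_{2r})). -/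

import Mathlib

open Matrix BigOperators

/-- Frobenius inner product of two real matrices. -/
noncomputable def frobInner {m n : ℕ} (A B : Matrix (Fin m) (Fin n) ℝ) : ℝ :=
  ∑ i, ∑ j, A i j * B i j

/-- Frobenius norm of a real matrix. -/
noncomputable def frobNorm {m n : ℕ} (A : Matrix (Fin m) (Fin n) ℝ) : ℝ :=
  Real.sqrt (∑ i, ∑ j, (A i j) ^ 2)

/-- Euclidean inner product on `ℝ^p`. -/
noncomputable def euclInner {p : ℕ} (x y : Fin p → ℝ) : ℝ := ∑ i, x i * y i

/-- Euclidean norm on `ℝ^p`. -/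
noncomputable def euclNorm {p : ℕ} (x : Fin p → ℝ) : ℝ := Real.sqrt (∑ i, (x i) ^ 2)

/-- `R` is the restricted isometry constant of order `s` of the linear map `A`:
the smallest number `t` such that `(1-t)‖Z‖_F² ≤ ‖A Z‖₂² ≤ (1+t)‖Z‖_F²`
for all matrices `Z` of rank at most `s`. -/
def IsRIC {m n p : ℕ} (A : Matrix (Fin m) (Fin n) ℝ →ₗ[ℝ] (Fin p → ℝ)) (s : ℕ) (R : ℝ) :
    Prop :=
  IsLeast {t : ℝ | ∀ Z : Matrix (Fin m) (Fin n) ℝ, Z.rank ≤ s →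
    (1 - t) * (frobNorm Z) ^ 2 ≤ (euclNorm (A Z)) ^ 2 ∧
      (euclNorm (A Z)) ^ 2 ≤ (1 + t) * (frobNorm Z) ^ 2} R

/-- Orthogonal projection onto the tangent space of the rank-`r` manifold at
`U * Σ * Vᵀ`: `P(Z) = U Uᵀ Z + Z V Vᵀ − U Uᵀ Z V Vᵀ`. -/
noncomputable def tangentProj {m n r : ℕ} (U : Matrix (Fin m) (Fin r) ℝ)
    (V : Matrix (Fin n) (Fin r) ℝ) (Z : Matrix (Fin m) (Fin n) ℝ) :
    Matrix (Fin m) (Fin n) ℝ :=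
  U * Uᵀ * Z + Z * (V * Vᵀ) - U * Uᵀ * Z * (V * Vᵀ)

/-- Spectral (operator) norm of a real matrix. -/
noncomputable def specNorm {m n : ℕ} (A : Matrix (Fin m) (Fin n) ℝ) : ℝ :=
  sSup {c : ℝ | ∃ x : Fin n → ℝ, euclNorm x ≤ 1 ∧ c = euclNorm (A.mulVec x)}

section aux

variable {m n p : ℕ}

lemma euclNorm_sq (x : Fin p → ℝ) : euclNorm x ^ 2 = ∑ i, x i ^ 2 := by
  rw [euclNorm, Real.sq_sqrt]; positivity

lemma frobNorm_sq (Z : Matrix (Fin m) (Fin n) ℝ) :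
    frobNorm Z ^ 2 = ∑ i, ∑ j, Z i j ^ 2 := by
  rw [frobNorm, Real.sq_sqrt]; positivity

lemma frobNorm_nonneg' (Z : Matrix (Fin m) (Fin n) ℝ) : 0 ≤ frobNorm Z :=
  Real.sqrt_nonneg _

lemma frobNorm_pos {Z : Matrix (Fin m) (Fin n) ℝ} (hZ : Z ≠ 0) : 0 < frobNorm Z := by
  rcases lt_or_eq_of_le (frobNorm_nonneg' Z) with h | h
  · exact h
  · exfalso; apply hZ
    have h0 : (∑ i, ∑ j, Z i j ^ 2) = 0 := by
      have := frobNorm_sq Z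
      rw [← h] at this; simpa using this.symm
    ext i j
    have h1 : ∀ i ∈ (Finset.univ : Finset (Fin m)), (0:ℝ) ≤ ∑ j, Z i j ^ 2 := by
      intro i _; positivity
    have h2 := (Finset.sum_eq_zero_iff_of_nonneg h1).mp h0 i (Finset.mem_univ i)
    have h3 : ∀ j ∈ (Finset.univ : Finset (Fin n)), (0:ℝ) ≤ Z i j ^ 2 := by
      intro j _; positivity
    have h4 := (Finset.sum_eq_zero_iff_of_nonneg h3).mp h2 j (Finset.mem_univ j)
    simpa [pow_eq_zero_iff] using h4

lemma frobInner_self (Z : Matrix (Fin m) (Fin n) ℝ) :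
    frobInner Z Z = frobNorm Z ^ 2 := by
  rw [frobNorm_sq, frobInner]
  exact Finset.sum_congr rfl fun i _ => Finset.sum_congr rfl fun j _ => (sq (Z i j)).symm

lemma euclInner_self (x : Fin p → ℝ) : euclInner x x = euclNorm x ^ 2 := by
  rw [euclNorm_sq, euclInner]
  exact Finset.sum_congr rfl fun i _ => (sq (x i)).symm

lemma euclInner_comm (x y : Fin p → ℝ) : euclInner x y = euclInner y x := by
  unfold euclInner; exact Finset.sum_congr rfl fun i _ => mul_comm _ _

lemma euclInner_add_right (x y z : Fin p → ℝ) :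
    euclInner x (y + z) = euclInner x y + euclInner x z := by
  unfold euclInner
  rw [← Finset.sum_add_distrib]
  exact Finset.sum_congr rfl fun i _ => by simp [mul_add]

lemma euclInner_smul_right (c : ℝ) (x y : Fin p → ℝ) :
    euclInner x (c • y) = c * euclInner x y := by
  unfold euclInner
  rw [Finset.mul_sum]
  exact Finset.sum_congr rfl fun i _ => by simp [Pi.smul_apply, smul_eq_mul]; ring

lemma eucl_expand_add (x y : Fin p → ℝ) :
    euclNorm (x + y) ^ 2 = euclNorm x ^ 2 + 2 * euclInner x y + euclNorm y ^ 2 := by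
  simp only [euclNorm_sq, euclInner, Pi.add_apply]
  rw [Finset.mul_sum, ← Finset.sum_add_distrib, ← Finset.sum_add_distrib]
  exact Finset.sum_congr rfl fun i _ => by ring

lemma eucl_expand_sub (x y : Fin p → ℝ) :
    euclNorm (x - y) ^ 2 = euclNorm x ^ 2 - 2 * euclInner x y + euclNorm y ^ 2 := by
  simp only [euclNorm_sq, euclInner, Pi.sub_apply]
  rw [Finset.mul_sum]
  rw [show (∑ i, x i ^ 2) - (∑ i, 2 * (x i * y i)) + ∑ i, y i ^ 2
      = ∑ i, (x i ^ 2 - 2 * (x i * y i) + y i ^ 2) by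
    rw [← Finset.sum_sub_distrib, ← Finset.sum_add_distrib]]
  exact Finset.sum_congr rfl fun i _ => by ring

lemma frobInner_add_right (x y z : Matrix (Fin m) (Fin n) ℝ) :
    frobInner x (y + z) = frobInner x y + frobInner x z := by
  unfold frobInner
  rw [← Finset.sum_add_distrib]
  refine Finset.sum_congr rfl fun i _ => ?_
  rw [← Finset.sum_add_distrib]
  exact Finset.sum_congr rfl fun j _ => by simp [Matrix.add_apply]; ring

lemma frobInner_smul_right (c : ℝ) (x y : Matrix (Fin m) (Fin n) ℝ) :
    frobInner x (c • y) = c * frobInner x y := by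
  unfold frobInner
  rw [Finset.mul_sum]
  refine Finset.sum_congr rfl fun i _ => ?_
  rw [Finset.mul_sum]
  exact Finset.sum_congr rfl fun j _ => by simp [Matrix.smul_apply, smul_eq_mul]; ring

lemma sum3_sub (f g h k : Fin m → Fin n → ℝ)
    (hpt : ∀ i j, k i j = f i j - g i j + h i j) :
    (∑ i, ∑ j, k i j) = (∑ i, ∑ j, f i j) - (∑ i, ∑ j, g i j) + (∑ i, ∑ j, h i j) := by
  rw [← Finset.sum_sub_distrib, ← Finset.sum_add_distrib]
  refine Finset.sum_congr rfl fun i _ => ?_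
  rw [← Finset.sum_sub_distrib, ← Finset.sum_add_distrib]
  exact Finset.sum_congr rfl fun j _ => hpt i j

lemma frob_expand_add (x y : Matrix (Fin m) (Fin n) ℝ) :
    frobNorm (x + y) ^ 2 = frobNorm x ^ 2 + 2 * frobInner x y + frobNorm y ^ 2 := by
  simp only [frobNorm_sq, frobInner, Finset.mul_sum, Matrix.add_apply]
  have h := sum3_sub (fun i j => x i j ^ 2) (fun i j => -(2 * (x i j * y i j)))
    (fun i j => y i j ^ 2) (fun i j => (x i j + y i j) ^ 2) (fun i j => by ring)
  simp only [Finset.sum_neg_distrib, sub_neg_eq_add] at h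
  linarith [h]

lemma frob_expand_sub (x y : Matrix (Fin m) (Fin n) ℝ) :
    frobNorm (x - y) ^ 2 = frobNorm x ^ 2 - 2 * frobInner x y + frobNorm y ^ 2 := by
  simp only [frobNorm_sq, frobInner, Finset.mul_sum, Matrix.sub_apply]
  exact sum3_sub _ _ _ _ (fun i j => by ring)

lemma frobInner_le (x y : Matrix (Fin m) (Fin n) ℝ) :
    frobInner x y ≤ frobNorm x * frobNorm y := by
  have hcs : (frobInner x y) ^ 2 ≤ (frobNorm x * frobNorm y) ^ 2 := by
    rw [mul_pow, frobNorm_sq, frobNorm_sq]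
    have h1 : (∑ q : Fin m × Fin n, x q.1 q.2 * y q.1 q.2) = frobInner x y := by
      rw [frobInner]; exact Fintype.sum_prod_type _
    have h2 : (∑ q : Fin m × Fin n, x q.1 q.2 ^ 2) = ∑ i, ∑ j, x i j ^ 2 :=
      Fintype.sum_prod_type _
    have h3 : (∑ q : Fin m × Fin n, y q.1 q.2 ^ 2) = ∑ i, ∑ j, y i j ^ 2 :=
      Fintype.sum_prod_type _
    rw [← h1, ← h2, ← h3]
    exact Finset.sum_mul_sq_le_sq_mul_sq _ _ _
  have hnn : 0 ≤ frobNorm x * frobNorm y :=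
    mul_nonneg (frobNorm_nonneg' _) (frobNorm_nonneg' _)
  nlinarith [abs_nonneg (frobInner x y), le_abs_self (frobInner x y)]

end aux

section tp

variable {m n r : ℕ} (U : Matrix (Fin m) (Fin r) ℝ) (V : Matrix (Fin n) (Fin r) ℝ)

lemma tP_add (X Y : Matrix (Fin m) (Fin n) ℝ) :
    tangentProj U V (X + Y) = tangentProj U V X + tangentProj U V Y := by
  simp only [tangentProj, Matrix.mul_add, Matrix.add_mul]
  abel

lemma tP_smul (c : ℝ) (X : Matrix (Fin m) (Fin n) ℝ) :
    tangentProj U V (c • X) = c • tangentProj U V X := by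
  simp only [tangentProj, Matrix.mul_smul, Matrix.smul_mul, smul_sub, smul_add]

lemma tP_idem (hU : Uᵀ * U = 1) (hV : Vᵀ * V = 1) (Z : Matrix (Fin m) (Fin n) ℝ) :
    tangentProj U V (tangentProj U V Z) = tangentProj U V Z := by
  have hUU : ∀ X : Matrix (Fin r) (Fin n) ℝ, Uᵀ * (U * X) = X := by
    intro X; rw [← Matrix.mul_assoc, hU, Matrix.one_mul]
  have hVt : Vᵀ * (V * Vᵀ) = Vᵀ := by
    rw [← Matrix.mul_assoc, hV, Matrix.one_mul]
  simp only [tangentProj, Matrix.mul_add, Matrix.add_mul, Matrix.mul_sub, Matrix.sub_mul,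
    Matrix.mul_assoc, hUU, hVt]
  abel

lemma tP_rank (Z : Matrix (Fin m) (Fin n) ℝ) : (tangentProj U V Z).rank ≤ 2 * r := by
  have hkey : ((Z - U * Uᵀ * Z) * V) * Vᵀ = Z * (V * Vᵀ) - U * Uᵀ * Z * (V * Vᵀ) := by
    rw [Matrix.sub_mul, Matrix.sub_mul, Matrix.mul_assoc Z V Vᵀ,
      Matrix.mul_assoc (U * Uᵀ * Z) V Vᵀ]
  have hdecomp : tangentProj U V Z = U * (Uᵀ * Z) + ((Z - U * Uᵀ * Z) * V) * Vᵀ := by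
    rw [hkey, ← Matrix.mul_assoc]
    simp only [tangentProj]
    abel
  have hradd : ∀ (X Y : Matrix (Fin m) (Fin n) ℝ), (X + Y).rank ≤ X.rank + Y.rank := by
    intro X Y
    rw [Matrix.rank, Matrix.rank, Matrix.rank, Matrix.mulVecLin_add]
    have hle : LinearMap.range (X.mulVecLin + Y.mulVecLin)
        ≤ LinearMap.range X.mulVecLin ⊔ LinearMap.range Y.mulVecLin := by
      rintro v ⟨y, rfl⟩
      exact Submodule.add_mem_sup (LinearMap.mem_range_self _ y) (LinearMap.mem_range_self _ y)
    exact (Submodule.finrank_mono hle).trans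
      (Submodule.finrank_add_le_finrank_add_finrank _ _)
  rw [hdecomp, two_mul]
  refine (hradd _ _).trans (add_le_add ?_ ?_)
  · exact (Matrix.rank_mul_le_left U (Uᵀ * Z)).trans
      ((Matrix.rank_le_card_width U).trans (by simp))
  · exact (Matrix.rank_mul_le_right _ Vᵀ).trans
      ((Matrix.rank_le_card_height Vᵀ).trans (by simp))

end tp

section cross

variable {m n p r : ℕ}

lemma eucl_smul_smul (c d : ℝ) (x y : Fin p → ℝ) :
    euclInner (c • x) (d • y) = (c * d) * euclInner x y := by
  unfold euclInner
  rw [Finset.mul_sum]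
  exact Finset.sum_congr rfl fun i _ => by
    simp [Pi.smul_apply, smul_eq_mul]; ring

lemma frob_smul_smul (c d : ℝ) (X Y : Matrix (Fin m) (Fin n) ℝ) :
    frobInner (c • X) (d • Y) = (c * d) * frobInner X Y := by
  unfold frobInner
  rw [Finset.mul_sum]
  refine Finset.sum_congr rfl fun i _ => ?_
  rw [Finset.mul_sum]
  exact Finset.sum_congr rfl fun j _ => by
    simp [Matrix.smul_apply, smul_eq_mul]; ring

lemma frobNorm_smul_sq (c : ℝ) (X : Matrix (Fin m) (Fin n) ℝ) :
    frobNorm (c • X) ^ 2 = c ^ 2 * frobNorm X ^ 2 := by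
  simp only [frobNorm_sq, Matrix.smul_apply, smul_eq_mul, mul_pow, Finset.mul_sum]

lemma cross_aux (A : Matrix (Fin m) (Fin n) ℝ →ₗ[ℝ] (Fin p → ℝ)) (R2 : ℝ)
    (hR2 : 0 ≤ R2)
    (hrip : ∀ Z : Matrix (Fin m) (Fin n) ℝ, Z.rank ≤ 2 * r →
      (1 - R2) * (frobNorm Z) ^ 2 ≤ (euclNorm (A Z)) ^ 2 ∧
        (euclNorm (A Z)) ^ 2 ≤ (1 + R2) * (frobNorm Z) ^ 2)
    (Y Z : Matrix (Fin m) (Fin n) ℝ)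
    (hcomb : ∀ s t : ℝ, (s • Y + t • Z).rank ≤ 2 * r) :
    |euclInner (A Y) (A Z) - frobInner Y Z| ≤ R2 * frobNorm Y * frobNorm Z := by
  have hz_case : ∀ W : Matrix (Fin m) (Fin n) ℝ,
      |euclInner (A 0) (A W) - frobInner (0 : Matrix (Fin m) (Fin n) ℝ) W| ≤ R2 * frobNorm (0 : Matrix (Fin m) (Fin n) ℝ) * frobNorm W := by
    intro W
    have e1 : euclInner (A (0 : Matrix (Fin m) (Fin n) ℝ)) (A W) = 0 := by
      rw [map_zero]
      exact Finset.sum_eq_zero fun i _ => by simp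
    have e2 : frobInner (0 : Matrix (Fin m) (Fin n) ℝ) W = 0 := by
      refine Finset.sum_eq_zero fun i _ => Finset.sum_eq_zero fun j _ => by simp
    have e3 : frobNorm (0 : Matrix (Fin m) (Fin n) ℝ) = 0 := by
      unfold frobNorm; simp
    rw [e1, e2, e3]; simp
  by_cases hY0 : Y = 0
  · subst hY0; exact hz_case Z
  by_cases hZ0 : Z = 0
  · subst hZ0
    have e1 : euclInner (A Y) (A (0 : Matrix (Fin m) (Fin n) ℝ)) = 0 := by
      rw [map_zero]
      exact Finset.sum_eq_zero fun i _ => by simp [euclInner]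
    have e2 : frobInner Y (0 : Matrix (Fin m) (Fin n) ℝ) = 0 := by
      refine Finset.sum_eq_zero fun i _ => Finset.sum_eq_zero fun j _ => by simp
    have e3 : frobNorm (0 : Matrix (Fin m) (Fin n) ℝ) = 0 := by
      unfold frobNorm; simp
    rw [e1, e2, e3]
    simp [mul_nonneg, hR2, frobNorm_nonneg']
  have ha : 0 < frobNorm Y := frobNorm_pos hY0
  have hb : 0 < frobNorm Z := frobNorm_pos hZ0
  set a := frobNorm Y with ha_def
  set b := frobNorm Z with hb_def
  set Y' : Matrix (Fin m) (Fin n) ℝ := a⁻¹ • Y with hY'_def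
  set Z' : Matrix (Fin m) (Fin n) ℝ := b⁻¹ • Z with hZ'_def
  have hY'sq : frobNorm Y' ^ 2 = 1 := by
    rw [hY'_def, frobNorm_smul_sq, ← ha_def]
    field_simp
  have hZ'sq : frobNorm Z' ^ 2 = 1 := by
    rw [hZ'_def, frobNorm_smul_sq, ← hb_def]
    field_simp
  have hu_rank : (Y' + Z').rank ≤ 2 * r := hcomb a⁻¹ b⁻¹
  have hv_rank : (Y' - Z').rank ≤ 2 * r := by
    have h : Y' - Z' = a⁻¹ • Y + (-b⁻¹) • Z := by
      rw [neg_smul, ← sub_eq_add_neg]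
    rw [h]; exact hcomb a⁻¹ (-b⁻¹)
  obtain ⟨hu1, hu2⟩ := hrip _ hu_rank
  obtain ⟨hv1, hv2⟩ := hrip _ hv_rank
  set Su := frobNorm (Y' + Z') ^ 2 with hSu_def
  set Sv := frobNorm (Y' - Z') ^ 2 with hSv_def
  set NAu := euclNorm (A (Y' + Z')) ^ 2 with hNAu_def
  set NAv := euclNorm (A (Y' - Z')) ^ 2 with hNAv_def
  have hSu0 : 0 ≤ Su := sq_nonneg _
  have hSv0 : 0 ≤ Sv := sq_nonneg _
  have hSuexp : Su = 2 + 2 * frobInner Y' Z' := by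
    rw [hSu_def, frob_expand_add, hY'sq, hZ'sq]; ring
  have hSvexp : Sv = 2 - 2 * frobInner Y' Z' := by
    rw [hSv_def, frob_expand_sub, hY'sq, hZ'sq]; ring
  have hNAuexp : NAu = euclNorm (A Y') ^ 2 + 2 * euclInner (A Y') (A Z')
      + euclNorm (A Z') ^ 2 := by
    rw [hNAu_def, map_add, eucl_expand_add]
  have hNAvexp : NAv = euclNorm (A Y') ^ 2 - 2 * euclInner (A Y') (A Z')
      + euclNorm (A Z') ^ 2 := by
    rw [hNAv_def, map_sub, eucl_expand_sub]
  have hcore : |euclInner (A Y') (A Z') - frobInner Y' Z'| ≤ R2 := by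
    have hq : euclInner (A Y') (A Z') - frobInner Y' Z'
        = ((NAu - NAv) - (Su - Sv)) / 4 := by
      rw [hNAuexp, hNAvexp, hSuexp, hSvexp]; ring
    have h4 : R2 * Su + R2 * Sv = 4 * R2 := by
      have hsum : Su + Sv = 4 := by rw [hSuexp, hSvexp]; ring
      rw [← mul_add, hsum]; ring
    rw [hq, abs_le]
    constructor <;> linarith [hu1, hu2, hv1, hv2, h4]
  have hYeq : Y = a • Y' := by
    rw [hY'_def, smul_smul, mul_inv_cancel₀ ha.ne', one_smul]
  have hZeq : Z = b • Z' := by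
    rw [hZ'_def, smul_smul, mul_inv_cancel₀ hb.ne', one_smul]
  have hmain : euclInner (A Y) (A Z) - frobInner Y Z
      = (a * b) * (euclInner (A Y') (A Z') - frobInner Y' Z') := by
    have hAY : A Y = a • A Y' := by rw [hYeq, _root_.map_smul]
    have hAZ : A Z = b • A Z' := by rw [hZeq, _root_.map_smul]
    rw [hAY, hAZ, eucl_smul_smul]
    rw [hYeq, hZeq, frob_smul_smul]
    ring
  rw [hmain, abs_mul, abs_of_pos (mul_pos ha hb)]
  calc a * b * |euclInner (A Y') (A Z') - frobInner Y' Z'|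
      ≤ a * b * R2 := by
        exact mul_le_mul_of_nonneg_left hcore (le_of_lt (mul_pos ha hb))
    _ = R2 * a * b := by ring

end cross

/-- Lemma 6, bound on `α_l`: under the restart conditions,
`|α_l − 1| ≤ R₂ᵣ / ((1 − R₂ᵣ) − κ₁(1 + R₂ᵣ))`. -/
theorem alpha_bound {m n p r : ℕ}
    (A : Matrix (Fin m) (Fin n) ℝ →ₗ[ℝ] (Fin p → ℝ))
    (R2 : ℝ) (hR2 : IsRIC A (2 * r) R2)
    (Xl : Matrix (Fin m) (Fin n) ℝ) (hrankXl : Xl.rank = r)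
    -- reduced SVD of `X_l`, defining the tangent space `S_l`
    (Ul : Matrix (Fin m) (Fin r) ℝ) (Vl : Matrix (Fin n) (Fin r) ℝ)
    (Sl : Matrix (Fin r) (Fin r) ℝ)
    (hUl : Ulᵀ * Ul = 1) (hVl : Vlᵀ * Vl = 1)
    (hSl : Sl.IsDiag ∧ ∀ i, 0 < Sl i i) (hXlsvd : Xl = Ul * Sl * Vlᵀ)
    (G P : Matrix (Fin m) (Fin n) ℝ)
    (hPne : tangentProj Ul Vl P ≠ 0)
    (κ1 κ2 : ℝ) (hκ1 : 0 < κ1 ∧ κ1 < 1) (hκ2 : 1 ≤ κ2)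
    (hpos : (1 - R2) - κ1 * (1 + R2) > 0)
    -- restart conditions
    (hcond1 : |frobInner (tangentProj Ul Vl G) (tangentProj Ul Vl P)| ≤
      κ1 * frobNorm (tangentProj Ul Vl G) * frobNorm (tangentProj Ul Vl P))
    (hcond2 : frobNorm (tangentProj Ul Vl G) ≤ κ2 * frobNorm (tangentProj Ul Vl P))
    (β : ℝ)
    (hβ : β = -(euclInner (A (tangentProj Ul Vl G)) (A (tangentProj Ul Vl P))) /
      (euclNorm (A (tangentProj Ul Vl P))) ^ 2)
    (Pl : Matrix (Fin m) (Fin n) ℝ)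
    (hPl : Pl = tangentProj Ul Vl G + β • tangentProj Ul Vl P)
    (hPlne : tangentProj Ul Vl Pl ≠ 0)
    (α : ℝ)
    (hα : α = frobInner (tangentProj Ul Vl G) (tangentProj Ul Vl Pl) /
      (euclNorm (A (tangentProj Ul Vl Pl))) ^ 2) :
    |α - 1| ≤ R2 / ((1 - R2) - κ1 * (1 + R2)) := by
  obtain ⟨hκ1p, hκ1l⟩ := hκ1
  have hrip : ∀ Z : Matrix (Fin m) (Fin n) ℝ, Z.rank ≤ 2 * r →
      (1 - R2) * (frobNorm Z) ^ 2 ≤ (euclNorm (A Z)) ^ 2 ∧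
        (euclNorm (A Z)) ^ 2 ≤ (1 + R2) * (frobNorm Z) ^ 2 := hR2.1
  set D : ℝ := (1 - R2) - κ1 * (1 + R2) with hD_def
  have hD : 0 < D := hpos
  set g := tangentProj Ul Vl G with hg_def
  set q := tangentProj Ul Vl P with hq_def
  set w := tangentProj Ul Vl Pl with hw_def
  have hwgq : w = g + β • q := by
    rw [hw_def, hPl, tP_add, tP_smul, hg_def, hq_def,
      tP_idem Ul Vl hUl hVl, tP_idem Ul Vl hUl hVl]
  -- basic positivity
  have hb : 0 < frobNorm q := frobNorm_pos hPne
  have hc : 0 < frobNorm w := frobNorm_pos hPlne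
  set a := frobNorm g with ha_def
  set b := frobNorm q with hb_def
  set c := frobNorm w with hc_def
  have hrkg : g.rank ≤ 2 * r := by rw [hg_def]; exact tP_rank _ _ _
  have hrkq : q.rank ≤ 2 * r := by rw [hq_def]; exact tP_rank _ _ _
  have hrkw : w.rank ≤ 2 * r := by rw [hw_def]; exact tP_rank _ _ _
  obtain ⟨l1, l2⟩ := hrip q hrkq
  have hb2 : 0 < b ^ 2 := pow_pos hb 2
  have hR2nn : 0 ≤ R2 := by
    have h12 : (1 - R2) * b ^ 2 ≤ (1 + R2) * b ^ 2 := le_trans l1 l2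
    have := le_of_mul_le_mul_right h12 hb2
    linarith
  have h1R2 : 0 < 1 - R2 := by
    have h0 : (0:ℝ) ≤ 1 + R2 := by linarith
    have := mul_nonneg hκ1p.le h0
    linarith
  set Nq := euclNorm (A q) ^ 2 with hNq_def
  have hNqlb : (1 - R2) * b ^ 2 ≤ Nq := l1
  have hNqpos : 0 < Nq := lt_of_lt_of_le (mul_pos h1R2 hb2) hNqlb
  set Nw := euclNorm (A w) ^ 2 with hNw_def
  have hNwlb : (1 - R2) * c ^ 2 ≤ Nw := (hrip w hrkw).1
  have hNwpos : 0 < Nw := lt_of_lt_of_le (mul_pos h1R2 (pow_pos hc 2)) hNwlb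
  -- g ≠ 0
  have hgne : g ≠ 0 := by
    intro h0
    apply hPlne
    have hz : euclInner (A g) (A q) = 0 := by
      rw [h0, map_zero]
      exact Finset.sum_eq_zero fun i _ => by simp [euclInner]
    have hβ0 : β = 0 := by rw [hβ, hz]; simp
    rw [hwgq, h0, hβ0]
    simp
  have ha : 0 < a := frobNorm_pos hgne
  -- orthogonality
  have hAw : A w = A g + β • A q := by rw [hwgq, map_add, _root_.map_smul]
  have horth : euclInner (A q) (A w) = 0 := by
    rw [hAw, euclInner_add_right, euclInner_smul_right, euclInner_self, ← hNq_def,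
      euclInner_comm (A q) (A g), hβ]
    field_simp
    ring
  have hKF : Nw = euclInner (A g) (A w) := by
    calc Nw = euclInner (A w) (A g + β • A q) := by rw [← hAw, hNw_def, euclInner_self]
      _ = euclInner (A w) (A g) + β * euclInner (A w) (A q) := by
          rw [euclInner_add_right, euclInner_smul_right]
      _ = euclInner (A g) (A w) := by
          rw [euclInner_comm (A w) (A q), horth, euclInner_comm (A w) (A g)]; ring
  -- cross (RIP inner product) estimates
  have hcomb_gw : ∀ s t : ℝ, (s • g + t • w).rank ≤ 2 * r := by
    intro s t
    have h : s • g + t • w = tangentProj Ul Vl (s • G + t • Pl) := by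
      rw [tP_add, tP_smul, tP_smul, hg_def, hw_def]
    rw [h]; exact tP_rank _ _ _
  have hcomb_gq : ∀ s t : ℝ, (s • g + t • q).rank ≤ 2 * r := by
    intro s t
    have h : s • g + t • q = tangentProj Ul Vl (s • G + t • P) := by
      rw [tP_add, tP_smul, tP_smul, hg_def, hq_def]
    rw [h]; exact tP_rank _ _ _
  have hcross_gw : |euclInner (A g) (A w) - frobInner g w| ≤ R2 * a * c :=
    cross_aux A R2 hR2nn hrip g w hcomb_gw
  have hcross_gq : |euclInner (A g) (A q) - frobInner g q| ≤ R2 * a * b :=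
    cross_aux A R2 hR2nn hrip g q hcomb_gq
  set I := euclInner (A g) (A q) with hI_def
  set J := frobInner g q with hJ_def
  set F := frobInner g w with hF_def
  set K := euclInner (A g) (A w) with hK_def
  -- bounds
  have hJb : |J| ≤ κ1 * a * b := hcond1
  have hIb : |I| ≤ (κ1 + R2) * (a * b) := by
    have h1 : |I| ≤ |I - J| + |J| := by
      calc |I| = |(I - J) + J| := by ring_nf
        _ ≤ |I - J| + |J| := abs_add_le _ _
    have h2 : (κ1 + R2) * (a * b) = R2 * a * b + κ1 * a * b := by ring
    linarith [h1, hJb, hcross_gq, h2.le, h2.ge]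
  have hIJ : I * J ≤ κ1 * (κ1 + R2) * (a ^ 2 * b ^ 2) := by
    have h1 : I * J ≤ |I| * |J| := by rw [← abs_mul]; exact le_abs_self _
    have h2 : |I| * |J| ≤ ((κ1 + R2) * (a * b)) * (κ1 * a * b) :=
      mul_le_mul hIb hJb (abs_nonneg _)
        (mul_nonneg (by linarith) (mul_nonneg ha.le hb.le))
    have h3 : ((κ1 + R2) * (a * b)) * (κ1 * a * b) = κ1 * (κ1 + R2) * (a ^ 2 * b ^ 2) := by
      ring
    linarith [h1, h2, h3.le]
  have hβNq : β * Nq = -I := by rw [hβ]; field_simp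
  have hFeq : F = a ^ 2 + β * J := by
    rw [hF_def, hwgq, frobInner_add_right, frobInner_smul_right, frobInner_self,
      ← ha_def, ← hJ_def]
  have hFNq : F * Nq = a ^ 2 * Nq - I * J := by
    calc F * Nq = a ^ 2 * Nq + (β * Nq) * J := by rw [hFeq]; ring
      _ = a ^ 2 * Nq - I * J := by rw [hβNq]; ring
  have hFle : F ≤ a * c := frobInner_le g w
  -- the key lower bound (1-R2) c ≥ D a
  have stepA : a ^ 2 * Nq - κ1 * (κ1 + R2) * (a ^ 2 * b ^ 2) ≤ F * Nq := by
    rw [hFNq]; linarith [hIJ]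
  have stepA' : (1 - R2) * (a ^ 2 * Nq - κ1 * (κ1 + R2) * (a ^ 2 * b ^ 2))
      ≤ (1 - R2) * (F * Nq) := mul_le_mul_of_nonneg_left stepA h1R2.le
  have stepB : (1 - R2) * (F * Nq) ≤ (1 - R2) * ((a * c) * Nq) :=
    mul_le_mul_of_nonneg_left (mul_le_mul_of_nonneg_right hFle hNqpos.le) h1R2.le
  have e0 : (1 - R2) * (a ^ 2 * b ^ 2) ≤ a ^ 2 * Nq := by
    calc (1 - R2) * (a ^ 2 * b ^ 2) = a ^ 2 * ((1 - R2) * b ^ 2) := by ring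
      _ ≤ a ^ 2 * Nq := mul_le_mul_of_nonneg_left hNqlb (sq_nonneg a)
  have e1 : κ1 * (κ1 + R2) * ((1 - R2) * (a ^ 2 * b ^ 2)) ≤ κ1 * (1 + R2) * (a ^ 2 * Nq) := by
    calc κ1 * (κ1 + R2) * ((1 - R2) * (a ^ 2 * b ^ 2))
        ≤ κ1 * (1 + R2) * ((1 - R2) * (a ^ 2 * b ^ 2)) := by
          apply mul_le_mul_of_nonneg_right _
            (mul_nonneg h1R2.le (mul_nonneg (sq_nonneg a) (sq_nonneg b)))
          exact mul_le_mul_of_nonneg_left (by linarith) hκ1p.le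
      _ ≤ κ1 * (1 + R2) * (a ^ 2 * Nq) :=
          mul_le_mul_of_nonneg_left e0 (mul_nonneg hκ1p.le (by linarith))
  have hgoal1 : D * (a ^ 2 * Nq) ≤ (1 - R2) * ((a * c) * Nq) := by
    rw [hD_def]
    linarith only [stepA', stepB, e1]
  have hca : D * a ≤ (1 - R2) * c := by
    have hfact : (D * a) * (a * Nq) ≤ ((1 - R2) * c) * (a * Nq) := by
      linarith only [hgoal1]
    exact le_of_mul_le_mul_right hfact (mul_pos ha hNqpos)
  -- conclude
  have h1 : α - 1 = (F - K) / Nw := by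
    rw [hα, ← hKF]
    field_simp
  rw [h1, abs_div, abs_of_pos hNwpos, div_le_div_iff₀ hNwpos hD]
  have h2 : |F - K| ≤ R2 * a * c := by rw [abs_sub_comm]; exact hcross_gw
  have h3 : |F - K| * D ≤ (R2 * a * c) * D := mul_le_mul_of_nonneg_right h2 hD.le
  have h4 : (R2 * a * c) * D = (R2 * c) * (D * a) := by ring
  have h5 : (R2 * c) * (D * a) ≤ (R2 * c) * ((1 - R2) * c) :=
    mul_le_mul_of_nonneg_left hca (mul_nonneg hR2nn hc.le)
  have h6 : (R2 * c) * ((1 - R2) * c) = R2 * ((1 - R2) * c ^ 2) := by ring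
  have h7 : R2 * ((1 - R2) * c ^ 2) ≤ R2 * Nw := mul_le_mul_of_nonneg_left hNwlb hR2nn
  linarith [h3, h5, h7, h4.le, h6.le]
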